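/- Let m, n ≥ 1, let L = lcm(m,n), let ω_m = exp(2πi/m) and ω_n = exp(2πi/n), and let t ∈ ℂ with |t| < 1. Then (1/(mn))·∑_{i=0}^{m−1}∑_{j=0}^{n−1} [(1 − t·ω_m^i)(1 − t·ω_n^j)(1 − t·ω_m^{−i}·ω_n^{−j})]^{−1} = [∑_{r=0}^{L−1} t^{3r − m⌊r/m⌋ − n⌊r/n⌋}] / [(1 − t^m)(1 − t^n)(1 − t^L)]. (Note 3r − m⌊r/m⌋ − n⌊r/n⌋ = r + (r mod m) + (r mod n).) This is the Molien (Hilbert) series of the orbifold ℂ³/(ℤ_m × ℤ_n), where the generator of ℤ_m acts on ℂ³ with eigenvalues (ω_m, 1, ω_m^{−1}) and the generator of ℤ_n acts with eigenvalues (1, ω_n, ω_n^{−1}). -/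

import Mathlib

open scoped BigOperators

private lemma molienAux_rootSum (m : ℕ) (hm : 0 < m) (k : ℤ) :
    ∑ i ∈ Finset.range m, Complex.exp (2*Real.pi*Complex.I/m) ^ ((i:ℤ)*k)
      = if (m:ℤ) ∣ k then (m:ℂ) else 0 := by
  set ζ : ℂ := Complex.exp (2*Real.pi*Complex.I/m) with hζdef
  have hm0 : (m:ℂ) ≠ 0 := Nat.cast_ne_zero.mpr hm.ne'
  have hζm : ζ ^ (m:ℤ) = 1 := by
    rw [hζdef, ← Complex.exp_int_mul]
    rw [show ((m:ℤ):ℂ) * (2*Real.pi*Complex.I/m) = 2*Real.pi*Complex.I by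
      push_cast; field_simp]
    exact Complex.exp_two_pi_mul_I
  have hz : ∀ i : ℕ, ζ ^ ((i:ℤ)*k) = (ζ^k)^i := by
    intro i
    rw [mul_comm, zpow_mul, zpow_natCast]
  simp only [hz]
  by_cases hd : (m:ℤ) ∣ k
  · obtain ⟨c, rfl⟩ := hd
    have h1 : ζ ^ ((m:ℤ)*c) = 1 := by rw [zpow_mul, hζm, one_zpow]
    simp [h1]
  · rw [if_neg hd]
    have h1 : ζ^k ≠ 1 := by
      intro h
      apply hd
      rw [hζdef, ← Complex.exp_int_mul] at h
      obtain ⟨c, hc⟩ := Complex.exp_eq_one_iff.mp h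
      refine ⟨c, ?_⟩
      have hπ : (Real.pi:ℂ) ≠ 0 := by exact_mod_cast Real.pi_ne_zero
      have hI := Complex.I_ne_zero
      have h2 : (k:ℂ) = (m:ℂ) * c := by
        field_simp at hc
        have h2pi : (2:ℂ)*Real.pi*Complex.I ≠ 0 := by simp [hπ, hI]
        have h3 : (k:ℂ) * (2*Real.pi*Complex.I) = ((m:ℂ)*c) * (2*Real.pi*Complex.I) := by
          linear_combination (2*Real.pi*Complex.I) * hc
        exact mul_right_cancel₀ h2pi h3
      exact_mod_cast h2
    rw [geom_sum_eq h1]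
    have h2 : (ζ^k)^m = 1 := by
      rw [← zpow_natCast, ← zpow_mul, mul_comm, zpow_mul, hζm, one_zpow]
    rw [h2, sub_self, zero_div]

private lemma molienAux_sumNorm {u : ℂ} (hu : ‖u‖ < 1) : Summable (fun a : ℕ => ‖u^a‖) := by
  simpa [norm_pow] using summable_geometric_of_lt_one (norm_nonneg u) hu

private lemma molienAux_tripleNorm {u v w : ℂ} (hu : ‖u‖ < 1) (hv : ‖v‖ < 1) (hw : ‖w‖ < 1) :
    Summable (fun x : (ℕ×ℕ)×ℕ => ‖u^x.1.1 * v^x.1.2 * w^x.2‖) :=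
  Summable.mul_norm (f := fun z : ℕ×ℕ => u^z.1*v^z.2) (g := fun c : ℕ => w^c)
    (Summable.mul_norm (f := fun a : ℕ => u^a) (g := fun b : ℕ => v^b)
      (molienAux_sumNorm hu) (molienAux_sumNorm hv))
    (molienAux_sumNorm hw)

private lemma molienAux_tripleInv {u v w : ℂ} (hu : ‖u‖ < 1) (hv : ‖v‖ < 1) (hw : ‖w‖ < 1) :
    ((1-u)*(1-v)*(1-w))⁻¹ = ∑' x : (ℕ×ℕ)×ℕ, u^x.1.1 * v^x.1.2 * w^x.2 := by
  rw [mul_inv, mul_inv, ← tsum_geometric_of_norm_lt_one hu,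
    ← tsum_geometric_of_norm_lt_one hv, ← tsum_geometric_of_norm_lt_one hw,
    tsum_mul_tsum_of_summable_norm (molienAux_sumNorm hu) (molienAux_sumNorm hv),
    tsum_mul_tsum_of_summable_norm
      (Summable.mul_norm (f := fun a : ℕ => u^a) (g := fun b : ℕ => v^b)
        (molienAux_sumNorm hu) (molienAux_sumNorm hv))
      (molienAux_sumNorm hw)]

private lemma molienAux_keyPow {z : ℂ} (hz : z ≠ 0) (i a c : ℕ) :
    (z^i)^a * (z^(-(i:ℤ)))^c = z^((i:ℤ)*((a:ℤ)-(c:ℤ))) := by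
  rw [← zpow_natCast z i, ← zpow_natCast (z^((i:ℤ))) a, ← zpow_natCast (z^(-(i:ℤ))) c,
    ← zpow_mul, ← zpow_mul, ← zpow_add₀ hz]
  ring_nf

private lemma molienAux_termEq {t ζ ξ : ℂ} (hζ : ζ ≠ 0) (hξ : ξ ≠ 0) (i j a b c : ℕ) :
    (t*ζ^i)^a * (t*ξ^j)^b * (t*ζ^(-(i:ℤ))*ξ^(-(j:ℤ)))^c
      = t^(a+b+c) * (ζ^((i:ℤ)*((a:ℤ)-(c:ℤ))) * ξ^((j:ℤ)*((b:ℤ)-(c:ℤ)))) := by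
  calc (t*ζ^i)^a * (t*ξ^j)^b * (t*ζ^(-(i:ℤ))*ξ^(-(j:ℤ)))^c
      = (t^a*t^b*t^c) * (((ζ^i)^a * (ζ^(-(i:ℤ)))^c) * ((ξ^j)^b * (ξ^(-(j:ℤ)))^c)) := by
        rw [mul_pow, mul_pow, mul_pow, mul_pow]; ring
    _ = t^(a+b+c) * (ζ^((i:ℤ)*((a:ℤ)-(c:ℤ))) * ξ^((j:ℤ)*((b:ℤ)-(c:ℤ)))) := by
        rw [molienAux_keyPow hζ i a c, molienAux_keyPow hξ j b c, ← pow_add, ← pow_add]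

private lemma molienAux_absRoot (k : ℕ) :
    ‖Complex.exp (2*Real.pi*Complex.I/k)‖ = 1 := by
  rw [show (2*(Real.pi:ℂ)*Complex.I/k) = ((2*Real.pi/k : ℝ):ℂ)*Complex.I by push_cast; ring]
  exact Complex.norm_exp_ofReal_mul_I _

private lemma molienAux_expE (m n r : ℕ) :
    3*r - m*(r/m) - n*(r/n) = r + r%m + r%n := by
  have h1 := Nat.div_add_mod r m
  have h2 := Nat.div_add_mod r n
  omega

theorem molien_Zm_Zn (m n : ℕ) (hm : 1 ≤ m) (hn : 1 ≤ n) (t : ℂ)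
    (ht : ‖t‖ < 1) :
    (1 / ((m : ℂ) * (n : ℂ))) *
      ∑ i ∈ Finset.range m, ∑ j ∈ Finset.range n,
        ((1 - t * Complex.exp (2 * Real.pi * Complex.I / m) ^ i) *
         (1 - t * Complex.exp (2 * Real.pi * Complex.I / n) ^ j) *
         (1 - t * Complex.exp (2 * Real.pi * Complex.I / m) ^ (-(i : ℤ)) *
              Complex.exp (2 * Real.pi * Complex.I / n) ^ (-(j : ℤ))))⁻¹
    = (∑ r ∈ Finset.range (Nat.lcm m n), t ^ (3 * r - m * (r / m) - n * (r / n))) /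
        ((1 - t ^ m) * (1 - t ^ n) * (1 - t ^ Nat.lcm m n)) := by
  have hm0 : 0 < m := hm
  have hn0 : 0 < n := hn
  set L : ℕ := Nat.lcm m n with hLdef
  have hL : 0 < L := Nat.pos_of_ne_zero (Nat.lcm_ne_zero hm0.ne' hn0.ne')
  have hmL : m ∣ L := Nat.dvd_lcm_left m n
  have hnL : n ∣ L := Nat.dvd_lcm_right m n
  set ζ : ℂ := Complex.exp (2*Real.pi*Complex.I/m) with hζdef
  set ξ : ℂ := Complex.exp (2*Real.pi*Complex.I/n) with hξdef
  have hζ0 : ζ ≠ 0 := Complex.exp_ne_zero _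
  have hξ0 : ξ ≠ 0 := Complex.exp_ne_zero _
  have hζa : ‖ζ‖ = 1 := molienAux_absRoot m
  have hξa : ‖ξ‖ = 1 := molienAux_absRoot n
  have htn : ‖t‖ < 1 := ht
  -- norms of the three geometric ratios
  have hnu : ∀ i : ℕ, ‖t * ζ^i‖ < 1 := by
    intro i
    rw [norm_mul, norm_pow, hζa, one_pow, mul_one]; exact htn
  have hnv : ∀ j : ℕ, ‖t * ξ^j‖ < 1 := by
    intro j
    rw [norm_mul, norm_pow, hξa, one_pow, mul_one]; exact htn
  have hnw : ∀ i j : ℕ, ‖t * ζ^(-(i:ℤ)) * ξ^(-(j:ℤ))‖ < 1 := by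
    intro i j
    rw [norm_mul, norm_mul,
      norm_zpow, norm_zpow, hζa, hξa, one_zpow, one_zpow, mul_one, mul_one]
    exact htn
  -- the common indicator function
  set F : (ℕ×ℕ)×ℕ → ℂ := fun x =>
    if ((m:ℤ) ∣ ((x.1.1:ℤ) - (x.2:ℤ)) ∧ (n:ℤ) ∣ ((x.1.2:ℤ) - (x.2:ℤ)))
    then t^(x.1.1+x.1.2+x.2) else 0 with hFdef
  set G : Fin L × ((ℕ×ℕ)×ℕ) → ℂ := fun z =>
    t ^ (3*(z.1:ℕ) - m*((z.1:ℕ)/m) - n*((z.1:ℕ)/n)) *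
      ((t^m)^z.2.1.1 * (t^n)^z.2.1.2 * (t^L)^z.2.2) with hGdef
  have hGpow : ∀ z : Fin L × ((ℕ×ℕ)×ℕ),
      G z = t ^ (((z.1:ℕ) + (z.1:ℕ)%m + (z.1:ℕ)%n) + (m*z.2.1.1 + n*z.2.1.2 + L*z.2.2)) := by
    intro z
    rw [hGdef]
    simp only
    rw [molienAux_expE m n (z.1:ℕ), ← pow_mul, ← pow_mul, ← pow_mul,
      ← pow_add, ← pow_add, ← pow_add]
  -- Step 1: LHS = ∑' F
  have hsm : ∀ i j : ℕ, Summable (fun x : (ℕ×ℕ)×ℕ =>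
      (t*ζ^i)^x.1.1 * (t*ξ^j)^x.1.2 * (t*ζ^(-(i:ℤ))*ξ^(-(j:ℤ)))^x.2) :=
    fun i j => (molienAux_tripleNorm (hnu i) (hnv j) (hnw i j)).of_norm
  have hLHS : (1 / ((m : ℂ) * (n : ℂ))) *
      ∑ i ∈ Finset.range m, ∑ j ∈ Finset.range n,
        ((1 - t * ζ ^ i) * (1 - t * ξ ^ j) *
         (1 - t * ζ ^ (-(i : ℤ)) * ξ ^ (-(j : ℤ))))⁻¹ = ∑' x, F x := by
    have step1 : ∀ i ∈ Finset.range m, ∀ j ∈ Finset.range n,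
        ((1 - t * ζ ^ i) * (1 - t * ξ ^ j) *
         (1 - t * ζ ^ (-(i : ℤ)) * ξ ^ (-(j : ℤ))))⁻¹
        = ∑' x : (ℕ×ℕ)×ℕ, (t*ζ^i)^x.1.1 * (t*ξ^j)^x.1.2 *
            (t*ζ^(-(i:ℤ))*ξ^(-(j:ℤ)))^x.2 := by
      intro i _ j _
      exact molienAux_tripleInv (hnu i) (hnv j) (hnw i j)
    rw [Finset.sum_congr rfl (fun i hi => Finset.sum_congr rfl (fun j hj => step1 i hi j hj))]
    have e1 : ∀ i : ℕ, ∑ j ∈ Finset.range n, ∑' x : (ℕ×ℕ)×ℕ,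
          (t*ζ^i)^x.1.1 * (t*ξ^j)^x.1.2 * (t*ζ^(-(i:ℤ))*ξ^(-(j:ℤ)))^x.2
        = ∑' x : (ℕ×ℕ)×ℕ, ∑ j ∈ Finset.range n,
          (t*ζ^i)^x.1.1 * (t*ξ^j)^x.1.2 * (t*ζ^(-(i:ℤ))*ξ^(-(j:ℤ)))^x.2 :=
      fun i => (Summable.tsum_finsetSum (fun j _ => hsm i j)).symm
    rw [Finset.sum_congr rfl (fun i _ => e1 i)]
    rw [← Summable.tsum_finsetSum (fun i _ => summable_sum (fun j _ => hsm i j))]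
    rw [← tsum_mul_left]
    apply tsum_congr
    rintro ⟨⟨a, b⟩, c⟩
    have hpt : ∀ i j : ℕ, (t*ζ^i)^a * (t*ξ^j)^b * (t*ζ^(-(i:ℤ))*ξ^(-(j:ℤ)))^c
        = t^(a+b+c) * (ζ^((i:ℤ)*((a:ℤ)-(c:ℤ))) * ξ^((j:ℤ)*((b:ℤ)-(c:ℤ)))) :=
      fun i j => molienAux_termEq hζ0 hξ0 i j a b c
    calc (1 / ((m:ℂ)*n)) * ∑ i ∈ Finset.range m, ∑ j ∈ Finset.range n,
          (t*ζ^i)^a * (t*ξ^j)^b * (t*ζ^(-(i:ℤ))*ξ^(-(j:ℤ)))^c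
        = (1 / ((m:ℂ)*n)) * ∑ i ∈ Finset.range m, ∑ j ∈ Finset.range n,
            t^(a+b+c) * (ζ^((i:ℤ)*((a:ℤ)-(c:ℤ))) * ξ^((j:ℤ)*((b:ℤ)-(c:ℤ)))) := by
          simp only [hpt]
      _ = (1 / ((m:ℂ)*n)) * (t^(a+b+c) *
            ((∑ i ∈ Finset.range m, ζ^((i:ℤ)*((a:ℤ)-(c:ℤ)))) *
             (∑ j ∈ Finset.range n, ξ^((j:ℤ)*((b:ℤ)-(c:ℤ)))))) := by
          congr 1
          symm
          rw [Finset.sum_mul_sum, Finset.mul_sum]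
          refine Finset.sum_congr rfl fun i _ => ?_
          rw [Finset.mul_sum]
      _ = F ((a,b),c) := by
          rw [hζdef, hξdef, molienAux_rootSum m hm0, molienAux_rootSum n hn0, hFdef]
          simp only
          have hmC : (m:ℂ) ≠ 0 := Nat.cast_ne_zero.mpr hm0.ne'
          have hnC : (n:ℂ) ≠ 0 := Nat.cast_ne_zero.mpr hn0.ne'
          by_cases h1 : (m:ℤ) ∣ ((a:ℤ) - (c:ℤ)) <;> by_cases h2 : (n:ℤ) ∣ ((b:ℤ) - (c:ℤ)) <;>
            simp [h1, h2] <;> field_simp <;> exact Or.inl (mul_comm _ _)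
    -- Step 2: RHS = ∑' G
  have htm : ∀ k : ℕ, 0 < k → ‖t^k‖ < 1 := by
    intro k hk
    rw [norm_pow]
    exact pow_lt_one₀ (norm_nonneg t) htn hk.ne'
  have hGsummable : Summable G :=
    summable_mul_of_summable_norm
      (f := fun r : Fin L => t ^ (3*(r:ℕ) - m*((r:ℕ)/m) - n*((r:ℕ)/n)))
      (g := fun x : (ℕ×ℕ)×ℕ => (t^m)^x.1.1 * (t^n)^x.1.2 * (t^L)^x.2)
      Summable.of_finite
      (molienAux_tripleNorm (htm m hm0) (htm n hn0) (htm L hL))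
  have hstep : ∑' z, G z = ∑ r ∈ Finset.range L, t ^ (3*r - m*(r/m) - n*(r/n)) *
      ∑' x : (ℕ×ℕ)×ℕ, (t^m)^x.1.1 * (t^n)^x.1.2 * (t^L)^x.2 := by
    rw [Summable.tsum_prod' hGsummable fun b => hGsummable.prod_factor b, tsum_fintype]
    rw [← Fin.sum_univ_eq_sum_range (fun k => t ^ (3*k - m*(k/m) - n*(k/n)) *
      ∑' x : (ℕ×ℕ)×ℕ, (t^m)^x.1.1 * (t^n)^x.1.2 * (t^L)^x.2) L]
    refine Finset.sum_congr rfl fun r _ => ?_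
    simp only [hGdef]
    exact tsum_mul_left
  have hRHS : (∑ r ∈ Finset.range L, t ^ (3*r - m*(r/m) - n*(r/n))) /
      ((1 - t^m) * (1 - t^n) * (1 - t^L)) = ∑' z, G z := by
    rw [div_eq_mul_inv, molienAux_tripleInv (htm m hm0) (htm n hn0) (htm L hL),
      Finset.sum_mul, hstep]
  -- Step 3: ∑' F = ∑' G via an explicit bijection
  have hFG : ∑' x, F x = ∑' z, G z := by
    apply tsum_eq_tsum_of_ne_zero_bij
      (i := fun z => ((((z.1.1 : ℕ) % m + m * z.1.2.1.1, (z.1.1:ℕ) % n + n * z.1.2.1.2),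
        (z.1.1:ℕ) + L * z.1.2.2)))
    · -- injective
      rintro ⟨⟨r, ⟨⟨p, q⟩, s⟩⟩, hz⟩ ⟨⟨r', ⟨⟨p', q'⟩, s'⟩⟩, hz'⟩ h
      simp only [Prod.mk.injEq] at h
      obtain ⟨⟨h1, h2⟩, h3⟩ := h
      have hr : (r:ℕ) = (r':ℕ) := by
        have e1 : ((r:ℕ) + L*s) % L = (r:ℕ) := by
          rw [Nat.add_mul_mod_self_left, Nat.mod_eq_of_lt r.isLt]
        have e2 : ((r':ℕ) + L*s') % L = (r':ℕ) := by
          rw [Nat.add_mul_mod_self_left, Nat.mod_eq_of_lt r'.isLt]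
        rw [← e1, ← e2, h3]
      have hs : s = s' := by
        have : L * s = L * s' := by omega
        exact Nat.eq_of_mul_eq_mul_left hL this
      have hp : p = p' := by
        rw [hr] at h1
        have : m * p = m * p' := by omega
        exact Nat.eq_of_mul_eq_mul_left hm0 this
      have hq : q = q' := by
        rw [hr] at h2
        have : n * q = n * q' := by omega
        exact Nat.eq_of_mul_eq_mul_left hn0 this
      apply Subtype.ext
      simp only [Prod.mk.injEq]
      exact ⟨Fin.ext hr, ⟨hp, hq⟩, hs⟩
    · -- support F ⊆ range
      rintro ⟨⟨a, b⟩, c⟩ hx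
      rw [Function.mem_support, hFdef] at hx
      simp only at hx
      by_cases hcond : (m:ℤ) ∣ ((a:ℤ) - (c:ℤ)) ∧ (n:ℤ) ∣ ((b:ℤ) - (c:ℤ))
      swap
      · rw [if_neg hcond] at hx; exact absurd rfl hx
      rw [if_pos hcond] at hx
      obtain ⟨hd1, hd2⟩ := hcond
      have ham : a % m = c % m := (Nat.modEq_iff_dvd.mpr hd1).symm
      have hbn : b % n = c % n := (Nat.modEq_iff_dvd.mpr hd2).symm
      have hclm : (c % L) % m = c % m := Nat.mod_mod_of_dvd c hmL
      have hcln : (c % L) % n = c % n := Nat.mod_mod_of_dvd c hnL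
      have ha' := Nat.div_add_mod a m
      have hb' := Nat.div_add_mod b n
      have hc' := Nat.div_add_mod c L
      refine ⟨⟨(⟨c % L, Nat.mod_lt c hL⟩, ((a / m, b / n), c / L)), ?_⟩, ?_⟩
      · rw [Function.mem_support, hGpow]
        simp only
        have e : c % L + (c % L) % m + (c % L) % n +
            (m*(a/m) + n*(b/n) + L*(c/L)) = a + b + c := by
          omega
        rw [e]
        exact hx
      · simp only [Prod.mk.injEq]
        refine ⟨⟨?_, ?_⟩, ?_⟩ <;> omega
    · -- values agree
      rintro ⟨⟨r, ⟨⟨p, q⟩, s⟩⟩, hz⟩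
      simp only
      rw [hFdef]
      simp only
      obtain ⟨u, hu⟩ := hmL
      obtain ⟨v, hv⟩ := hnL
      have hd1 : (m:ℤ) ∣ (((r:ℕ) % m + m * p : ℕ) : ℤ) - (((r:ℕ) + L * s : ℕ) : ℤ) := by
        rw [← Nat.modEq_iff_dvd]
        show ((r:ℕ) + L * s) % m = ((r:ℕ) % m + m * p) % m
        have hLs : L * s = m * (u * s) := by rw [hu]; ring
        rw [hLs, Nat.add_mul_mod_self_left, Nat.add_mul_mod_self_left,
          Nat.mod_mod_of_dvd (r:ℕ) dvd_rfl]
      have hd2 : (n:ℤ) ∣ (((r:ℕ) % n + n * q : ℕ) : ℤ) - (((r:ℕ) + L * s : ℕ) : ℤ) := by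
        rw [← Nat.modEq_iff_dvd]
        show ((r:ℕ) + L * s) % n = ((r:ℕ) % n + n * q) % n
        have hLs : L * s = n * (v * s) := by rw [hv]; ring
        rw [hLs, Nat.add_mul_mod_self_left, Nat.add_mul_mod_self_left,
          Nat.mod_mod_of_dvd (r:ℕ) dvd_rfl]
      rw [if_pos ⟨hd1, hd2⟩, hGpow]
      congr 1
      dsimp only
      have h1 := Nat.div_add_mod (r:ℕ) m
      have h2 := Nat.div_add_mod (r:ℕ) n
      omega
  rw [hLHS, hFG, hRHS]
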